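/- arXiv:2503.22898 — 5 statements merged into one kernel-verified Lean document; each statement's English description precedes it below -/
import Mathlib

section
/- Let γ > 0, n ∈ ℕ, and fix w ∈ 𝔻. Define l_i(z) = (1-|w|²)^i / (1 - conj(w)·z)^{γ+i-1} for i = 1,2,3, and set f_w = (γ+n+2)/(γ+n) · ∏_{j=0}^{n-1}(γ+j+1)(γ+j+2) · l₁ − 2(γ+n+2)/(γ+n+1) · ∏_{j=0}^{n-1}(γ+j)(γ+j+2) · l₂ + ∏_{j=0}^{n-1}(γ+j)(γ+j+1) · l₃. Then f_w^{(n+1)}(w) = 0 and f_w^{(n+2)}(w) = 0. -/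
open Complex Metric Finset

/-- The kernel `l_i(z) = (1-|w|²)^i / (1 - conj w · z)^(γ+i-1)`. -/
noncomputable def lKernel (w : ℂ) (γ : ℝ) (i : ℕ) (z : ℂ) : ℂ :=
  ((1 - ‖w‖ ^ 2 : ℝ) : ℂ) ^ i / (1 - (starRingEnd ℂ) w * z) ^ ((γ : ℂ) + i - 1)

/-- The test function `f_w`. -/
noncomputable def fTest (w : ℂ) (γ : ℝ) (n : ℕ) (z : ℂ) : ℂ :=
  ((γ : ℂ) + n + 2) / ((γ : ℂ) + n) *
      (∏ j ∈ range n, (((γ : ℂ) + j + 1) * ((γ : ℂ) + j + 2))) * lKernel w γ 1 z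
  - 2 * ((γ : ℂ) + n + 2) / ((γ : ℂ) + n + 1) *
      (∏ j ∈ range n, (((γ : ℂ) + j) * ((γ : ℂ) + j + 2))) * lKernel w γ 2 z
  + (∏ j ∈ range n, (((γ : ℂ) + j) * ((γ : ℂ) + j + 1))) * lKernel w γ 3 z

lemma hasDerivAt_cpow_term (a c s : ℂ) {z : ℂ} (hz : 1 - a * z ∈ Complex.slitPlane) :
    HasDerivAt (fun z : ℂ => c * (1 - a * z) ^ (-s)) (c * s * a * (1 - a * z) ^ (-s - 1)) z := by
  have h1 : HasDerivAt (fun z : ℂ => 1 - a * z) (-a) z := by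
    simpa using ((hasDerivAt_id z).const_mul a).const_sub 1
  have h2 := (h1.cpow_const (c := -s) hz).const_mul c
  exact h2.congr_deriv (by ring)

lemma iteratedDeriv_sum_cpow {ι : Type*} (t : Finset ι) (a : ℂ) (c s : ι → ℂ) (k : ℕ) :
    ∀ z : ℂ, (1 - a * z) ∈ Complex.slitPlane →
      iteratedDeriv k (fun z => ∑ i ∈ t, c i * (1 - a * z) ^ (-(s i))) z
        = ∑ i ∈ t, c i * (∏ j ∈ range k, (s i + j)) * a ^ k * (1 - a * z) ^ (-(s i) - k) := by
  induction k with
  | zero => intro z hz; simp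
  | succ k ih =>
    intro z hz
    rw [iteratedDeriv_succ]
    have hU : IsOpen {z : ℂ | 1 - a * z ∈ Complex.slitPlane} :=
      Complex.isOpen_slitPlane.preimage (by continuity)
    have hev : iteratedDeriv k (fun z => ∑ i ∈ t, c i * (1 - a * z) ^ (-(s i)))
        =ᶠ[nhds z] fun z => ∑ i ∈ t,
          c i * (∏ j ∈ range k, (s i + j)) * a ^ k * (1 - a * z) ^ (-(s i) - k) :=
      Filter.eventually_of_mem (hU.mem_nhds hz) fun y hy => ih y hy
    rw [hev.deriv_eq]
    have hd : HasDerivAt (fun z : ℂ => ∑ i ∈ t,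
          c i * (∏ j ∈ range k, (s i + j)) * a ^ k * (1 - a * z) ^ (-(s i) - k))
        (∑ i ∈ t, (c i * (∏ j ∈ range k, (s i + j)) * a ^ k) * (s i + k) * a *
          (1 - a * z) ^ (-(s i + (k : ℂ)) - 1)) z := by
      apply HasDerivAt.fun_sum
      intro i _
      have he : (fun z : ℂ =>
            c i * (∏ j ∈ range k, (s i + j)) * a ^ k * (1 - a * z) ^ (-(s i) - (k : ℂ)))
          = fun z : ℂ =>
            (c i * (∏ j ∈ range k, (s i + j)) * a ^ k) * (1 - a * z) ^ (-(s i + (k : ℂ))) := by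
        funext z
        rw [show -(s i) - (k : ℂ) = -(s i + (k : ℂ)) by ring]
      rw [he]
      exact hasDerivAt_cpow_term a _ (s i + k) hz
    rw [hd.deriv]
    refine Finset.sum_congr rfl fun i _ => ?_
    rw [prod_range_succ,
      show -(s i + (k : ℂ)) - 1 = -(s i) - ((k + 1 : ℕ) : ℂ) by push_cast; ring]
    push_cast
    ring

theorem fTest_higher_derivs_vanish (γ : ℝ) (hγ : 0 < γ) (n : ℕ) (w : ℂ)
    (hw : w ∈ ball (0:ℂ) 1) :
    iteratedDeriv (n + 1) (fTest w γ n) w = 0 ∧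
    iteratedDeriv (n + 2) (fTest w γ n) w = 0 := by
  set a : ℂ := (starRingEnd ℂ) w with ha
  set tR : ℝ := 1 - ‖w‖ ^ 2 with htR
  have hwlt : ‖w‖ < 1 := by simpa using mem_ball_zero_iff.mp hw
  have htpos : 0 < tR := by
    have : ‖w‖ ^ 2 < 1 := by nlinarith [norm_nonneg w]
    simp [htR]; linarith
  have htne : ((tR : ℝ) : ℂ) ≠ 0 := Complex.ofReal_ne_zero.mpr htpos.ne'
  have hzw : 1 - a * w = ((tR : ℝ) : ℂ) := by
    rw [ha, htR, mul_comm, Complex.mul_conj, ← Complex.sq_norm]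
    push_cast
    ring
  have hslit : 1 - a * w ∈ Complex.slitPlane := by
    rw [hzw]
    exact Complex.ofReal_mem_slitPlane.2 htpos
  -- the coefficients and exponents
  set A1 : ℂ := ((γ : ℂ) + n + 2) / ((γ : ℂ) + n) *
      (∏ j ∈ range n, (((γ : ℂ) + j + 1) * ((γ : ℂ) + j + 2))) with hA1
  set A2 : ℂ := 2 * ((γ : ℂ) + n + 2) / ((γ : ℂ) + n + 1) *
      (∏ j ∈ range n, (((γ : ℂ) + j) * ((γ : ℂ) + j + 2))) with hA2
  set A3 : ℂ := (∏ j ∈ range n, (((γ : ℂ) + j) * ((γ : ℂ) + j + 1))) with hA3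
  set c : Fin 3 → ℂ := ![A1 * ((tR : ℝ) : ℂ) ^ (1 : ℕ), -(A2 * ((tR : ℝ) : ℂ) ^ (2 : ℕ)),
      A3 * ((tR : ℝ) : ℂ) ^ (3 : ℕ)] with hc
  set s : Fin 3 → ℂ := ![(γ : ℂ), (γ : ℂ) + 1, (γ : ℂ) + 2] with hs
  have hfun : fTest w γ n = fun z => ∑ i : Fin 3, c i * (1 - a * z) ^ (-(s i)) := by
    funext z
    simp only [fTest, lKernel, Fin.sum_univ_three, hc, hs, Matrix.cons_val_zero,
      Matrix.cons_val_one, Matrix.head_cons, Matrix.cons_val_two, Matrix.tail_cons,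
      Nat.cast_one, Nat.cast_ofNat, div_eq_mul_inv, ← Complex.cpow_neg,
      show ((γ : ℂ) + 1 - 1) = (γ : ℂ) by ring,
      show ((γ : ℂ) + 2 - 1) = (γ : ℂ) + 1 by ring,
      show ((γ : ℂ) + 3 - 1) = (γ : ℂ) + 2 by ring, ← ha, ← htR, hA1, hA2, hA3]
    ring
  have hne0 : ((γ : ℂ) + n) ≠ 0 := by
    rw [show ((γ : ℂ) + n) = ((γ + n : ℝ) : ℂ) by push_cast; ring]
    exact Complex.ofReal_ne_zero.mpr (by positivity)
  have hne1 : ((γ : ℂ) + n + 1) ≠ 0 := by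
    rw [show ((γ : ℂ) + n + 1) = ((γ + n + 1 : ℝ) : ℂ) by push_cast; ring]
    exact Complex.ofReal_ne_zero.mpr (by positivity)
  -- merging the powers of tR
  have hmerge : ∀ (i : ℕ) (k : ℕ), ((tR : ℝ) : ℂ) ^ i *
      ((tR : ℝ) : ℂ) ^ (-((γ : ℂ) + i - 1) - (k : ℂ))
        = ((tR : ℝ) : ℂ) ^ ((1 : ℂ) - γ - k) := by
    intro i k
    rw [← Complex.cpow_natCast, ← Complex.cpow_add _ _ htne]
    congr 1
    ring
  -- the key product identities
  have hQ2 : ∀ m : ℕ, (∏ j ∈ range m, ((γ : ℂ) + 1 + j))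
      = ∏ j ∈ range m, ((γ : ℂ) + j + 1) :=
    fun m => Finset.prod_congr rfl fun j _ => by ring
  have hQ3 : ∀ m : ℕ, (∏ j ∈ range m, ((γ : ℂ) + 2 + j))
      = ∏ j ∈ range m, ((γ : ℂ) + j + 2) :=
    fun m => Finset.prod_congr rfl fun j _ => by ring
  have hA1' : (∏ j ∈ range n, (((γ : ℂ) + j + 1) * ((γ : ℂ) + j + 2)))
      = (∏ j ∈ range n, ((γ : ℂ) + j + 1)) * (∏ j ∈ range n, ((γ : ℂ) + j + 2)) :=
    Finset.prod_mul_distrib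
  have hA2' : (∏ j ∈ range n, (((γ : ℂ) + j) * ((γ : ℂ) + j + 2)))
      = (∏ j ∈ range n, ((γ : ℂ) + j)) * (∏ j ∈ range n, ((γ : ℂ) + j + 2)) :=
    Finset.prod_mul_distrib
  have hA3' : (∏ j ∈ range n, (((γ : ℂ) + j) * ((γ : ℂ) + j + 1)))
      = (∏ j ∈ range n, ((γ : ℂ) + j)) * (∏ j ∈ range n, ((γ : ℂ) + j + 1)) :=
    Finset.prod_mul_distrib
  have main : ∀ k : ℕ, (A1 * (∏ j ∈ range k, ((γ : ℂ) + j))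
        - A2 * (∏ j ∈ range k, ((γ : ℂ) + 1 + j))
        + A3 * (∏ j ∈ range k, ((γ : ℂ) + 2 + j)) = 0) →
      iteratedDeriv k (fTest w γ n) w = 0 := by
    intro k hB
    rw [hfun, iteratedDeriv_sum_cpow Finset.univ a c s k w hslit, hzw, Fin.sum_univ_three]
    simp only [hc, hs, Matrix.cons_val_zero, Matrix.cons_val_one, Matrix.head_cons,
      Matrix.cons_val_two, Matrix.tail_cons]
    have h1 : A1 * ((tR : ℝ) : ℂ) ^ (1 : ℕ) * (∏ j ∈ range k, ((γ : ℂ) + j)) * a ^ k *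
        ((tR : ℝ) : ℂ) ^ (-(γ : ℂ) - (k : ℂ))
        = (A1 * (∏ j ∈ range k, ((γ : ℂ) + j))) * (a ^ k * ((tR : ℝ) : ℂ) ^ ((1 : ℂ) - γ - k)) := by
      rw [← hmerge 1 k, show (-((γ : ℂ) + (1 : ℕ) - 1) - (k : ℂ)) = -(γ : ℂ) - (k : ℂ) by
        push_cast; ring]
      ring
    have h2 : -(A2 * ((tR : ℝ) : ℂ) ^ (2 : ℕ)) * (∏ j ∈ range k, ((γ : ℂ) + 1 + j)) * a ^ k *
        ((tR : ℝ) : ℂ) ^ (-((γ : ℂ) + 1) - (k : ℂ))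
        = -(A2 * (∏ j ∈ range k, ((γ : ℂ) + 1 + j))) *
          (a ^ k * ((tR : ℝ) : ℂ) ^ ((1 : ℂ) - γ - k)) := by
      rw [← hmerge 2 k, show (-((γ : ℂ) + (2 : ℕ) - 1) - (k : ℂ)) = -((γ : ℂ) + 1) - (k : ℂ) by
        push_cast; ring]
      ring
    have h3 : A3 * ((tR : ℝ) : ℂ) ^ (3 : ℕ) * (∏ j ∈ range k, ((γ : ℂ) + 2 + j)) * a ^ k *
        ((tR : ℝ) : ℂ) ^ (-((γ : ℂ) + 2) - (k : ℂ))
        = (A3 * (∏ j ∈ range k, ((γ : ℂ) + 2 + j))) *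
          (a ^ k * ((tR : ℝ) : ℂ) ^ ((1 : ℂ) - γ - k)) := by
      rw [← hmerge 3 k, show (-((γ : ℂ) + (3 : ℕ) - 1) - (k : ℂ)) = -((γ : ℂ) + 2) - (k : ℂ) by
        push_cast; ring]
      ring
    rw [h1, h2, h3]
    linear_combination (a ^ k * ((tR : ℝ) : ℂ) ^ ((1 : ℂ) - γ - k)) * hB
  constructor
  · apply main
    rw [hA1, hA2, hA3, hA1', hA2', hA3', prod_range_succ, prod_range_succ, prod_range_succ,
      hQ2, hQ3]
    field_simp
    ring
  · apply main
    rw [hA1, hA2, hA3, hA1', hA2', hA3', prod_range_succ, prod_range_succ, prod_range_succ,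
      prod_range_succ, prod_range_succ, prod_range_succ, hQ2, hQ3]
    field_simp
    ring
end

section
/- Let γ > 0, n ∈ ℕ, and fix w ∈ 𝔻. With l_i and f_w as defined (f_w = (γ+n+2)/(γ+n)·∏_{j=0}^{n-1}(γ+j+1)(γ+j+2)·l₁ − 2(γ+n+2)/(γ+n+1)·∏_{j=0}^{n-1}(γ+j)(γ+j+2)·l₂ + ∏_{j=0}^{n-1}(γ+j)(γ+j+1)·l₃), one has f_w^{(n)}(w) = [2·∏_{j=0}^{n-1}(γ+j)(γ+j+1)(γ+j+2)] / [(γ+n)(γ+n+1)] · conj(w)^n / (1-|w|²)^{γ+n-1}. -/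
open Complex Metric Finset

lemma hasDerivAt_term (u s c : ℂ) (z : ℂ) (hz : 0 < (1 - u * z).re) :
    HasDerivAt (fun z => c * (1 - u * z) ^ (-s))
      (c * (s * u * (1 - u * z) ^ (-s - 1))) z := by
  have h1 : HasDerivAt (fun z : ℂ => 1 - u * z) (-u) z := by
    simpa using ((hasDerivAt_id z).const_mul u).const_sub 1
  have h2 := h1.cpow_const (c := -s) (Or.inl hz)
  have := h2.const_mul c
  refine this.congr_deriv ?_
  ring

lemma key (u a₁ a₂ a₃ s₁ s₂ s₃ : ℂ) (n : ℕ) :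
    ∀ z : ℂ, 0 < (1 - u * z).re →
    iteratedDeriv n (fun z => a₁ * (1 - u * z) ^ (-s₁) + a₂ * (1 - u * z) ^ (-s₂)
        + a₃ * (1 - u * z) ^ (-s₃)) z
      = a₁ * u ^ n * (∏ j ∈ range n, (s₁ + j)) * (1 - u * z) ^ (-s₁ - n)
      + a₂ * u ^ n * (∏ j ∈ range n, (s₂ + j)) * (1 - u * z) ^ (-s₂ - n)
      + a₃ * u ^ n * (∏ j ∈ range n, (s₃ + j)) * (1 - u * z) ^ (-s₃ - n) := by
  induction n with
  | zero => intro z hz; simp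
  | succ n ih =>
    intro z hz
    have hU : IsOpen {z : ℂ | 0 < (1 - u * z).re} :=
      isOpen_lt continuous_const
        (Complex.continuous_re.comp (continuous_const.sub (continuous_mul_left u)))
    have hev : iteratedDeriv n (fun z => a₁ * (1 - u * z) ^ (-s₁) + a₂ * (1 - u * z) ^ (-s₂)
        + a₃ * (1 - u * z) ^ (-s₃)) =ᶠ[nhds z]
        (fun z => a₁ * u ^ n * (∏ j ∈ range n, (s₁ + j)) * (1 - u * z) ^ (-s₁ - n)
          + a₂ * u ^ n * (∏ j ∈ range n, (s₂ + j)) * (1 - u * z) ^ (-s₂ - n)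
          + a₃ * u ^ n * (∏ j ∈ range n, (s₃ + j)) * (1 - u * z) ^ (-s₃ - n)) :=
      Filter.eventuallyEq_of_mem (hU.mem_nhds hz) (fun y hy => ih y hy)
    rw [iteratedDeriv_succ, hev.deriv_eq]
    have hd := ((hasDerivAt_term u (s₁ + n) (a₁ * u ^ n * (∏ j ∈ range n, (s₁ + j))) z hz).add
      (hasDerivAt_term u (s₂ + n) (a₂ * u ^ n * (∏ j ∈ range n, (s₂ + j))) z hz)).add
      (hasDerivAt_term u (s₃ + n) (a₃ * u ^ n * (∏ j ∈ range n, (s₃ + j))) z hz)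
    have e2 : ∀ s : ℂ, -(s + (n:ℂ)) = -s - (n:ℂ) := fun s => by ring
    simp only [e2, Pi.add_def] at hd
    rw [hd.deriv]
    have ec : ((n+1:ℕ):ℂ) = (n:ℂ)+1 := by push_cast; ring
    have e3 : ∀ s : ℂ, -s - ((n:ℂ)+1) = -s - n - 1 := by intro s; ring
    simp only [ec, e3, prod_range_succ]
    ring

set_option maxHeartbeats 1600000 in
theorem fTest_nth_deriv (γ : ℝ) (hγ : 0 < γ) (n : ℕ) (w : ℂ)
    (hw : w ∈ ball (0:ℂ) 1) :
    iteratedDeriv n (fTest w γ n) w =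
      2 * (∏ j ∈ range n, (((γ : ℂ) + j) * ((γ : ℂ) + j + 1) * ((γ : ℂ) + j + 2))) /
        (((γ : ℂ) + n) * ((γ : ℂ) + n + 1)) *
        ((starRingEnd ℂ) w) ^ n /
        ((1 - ‖w‖ ^ 2 : ℝ) : ℂ) ^ ((γ : ℂ) + n - 1) := by
  set u := (starRingEnd ℂ) w with hu
  set x : ℝ := 1 - ‖w‖ ^ 2 with hxdef
  have habs : ‖w‖ < 1 := by
    simpa using mem_ball_zero_iff.mp hw
  have hx : 0 < x := by
    have : ‖w‖ ^ 2 < 1 := by nlinarith [norm_nonneg w]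
    simp only [hxdef]; linarith
  have hx0 : ((x:ℝ):ℂ) ≠ 0 := by exact_mod_cast ne_of_gt hx
  have hzw : 1 - u * w = ((x:ℝ):ℂ) := by
    rw [hu, mul_comm, Complex.mul_conj, Complex.normSq_eq_norm_sq, hxdef]
    push_cast; ring
  have hre : 0 < (1 - u * w).re := by rw [hzw]; simpa using hx
  set c₁ : ℂ := ((γ : ℂ) + n + 2) / ((γ : ℂ) + n) *
      (∏ j ∈ range n, (((γ : ℂ) + j + 1) * ((γ : ℂ) + j + 2))) with hc1
  set c₂ : ℂ := -(2 * ((γ : ℂ) + n + 2) / ((γ : ℂ) + n + 1) *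
      (∏ j ∈ range n, (((γ : ℂ) + j) * ((γ : ℂ) + j + 2)))) with hc2
  set c₃ : ℂ := (∏ j ∈ range n, (((γ : ℂ) + j) * ((γ : ℂ) + j + 1))) with hc3
  have hfun : fTest w γ n = (fun z => (c₁ * ((x:ℝ):ℂ)^(1:ℕ)) * (1 - u * z) ^ (-(γ:ℂ))
      + (c₂ * ((x:ℝ):ℂ)^(2:ℕ)) * (1 - u * z) ^ (-((γ:ℂ)+1))
      + (c₃ * ((x:ℝ):ℂ)^(3:ℕ)) * (1 - u * z) ^ (-((γ:ℂ)+2))) := by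
    funext z
    simp only [fTest, lKernel, hc1, hc2, hc3, ← hu, ← hxdef]
    have e1 : ((γ:ℂ) + ((1:ℕ):ℂ) - 1) = (γ:ℂ) := by push_cast; ring
    have e2 : ((γ:ℂ) + ((2:ℕ):ℂ) - 1) = (γ:ℂ)+1 := by push_cast; ring
    have e3 : ((γ:ℂ) + ((3:ℕ):ℂ) - 1) = (γ:ℂ)+2 := by push_cast; ring
    rw [e1, e2, e3, Complex.cpow_neg, Complex.cpow_neg, Complex.cpow_neg]
    field_simp
    ring
  rw [hfun, key u _ _ _ _ _ _ n w hre, hzw]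
  have hpow : ∀ (i : ℕ) (s : ℂ), ((x:ℝ):ℂ)^(i:ℕ) * ((x:ℝ):ℂ)^(-s - (n:ℂ))
      = ((x:ℝ):ℂ)^((i:ℂ) - s - n) := by
    intro i s
    rw [← Complex.cpow_natCast, ← Complex.cpow_add _ _ hx0]
    congr 1; ring
  have hT : ((x:ℝ):ℂ) ^ ((γ:ℂ) + n - 1) ≠ 0 := by
    simp [Complex.cpow_eq_zero_iff, hx0]
  have hne1 : (γ:ℂ) + n ≠ 0 := by
    have : ((γ + n : ℝ):ℂ) ≠ 0 := by
      exact_mod_cast ne_of_gt (by positivity : (0:ℝ) < γ + n)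
    push_cast at this; exact this
  have hne2 : (γ:ℂ) + n + 1 ≠ 0 := by
    have : ((γ + n + 1 : ℝ):ℂ) ≠ 0 := by
      exact_mod_cast ne_of_gt (by positivity : (0:ℝ) < γ + n + 1)
    push_cast at this; exact this
  have hcomb : ∀ (i : ℕ) (s c P : ℂ), (i:ℂ) - s - n = -((γ:ℂ) + n - 1) →
      (c * ((x:ℝ):ℂ)^(i:ℕ)) * u ^ n * P * ((x:ℝ):ℂ) ^ (-s - (n:ℂ))
        = c * u ^ n * P * (((x:ℝ):ℂ) ^ ((γ:ℂ) + n - 1))⁻¹ := by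
    intro i s c P hes
    have h := hpow i s
    rw [hes, Complex.cpow_neg] at h
    calc (c * ((x:ℝ):ℂ)^(i:ℕ)) * u ^ n * P * ((x:ℝ):ℂ) ^ (-s - (n:ℂ))
        = c * u ^ n * P * (((x:ℝ):ℂ)^(i:ℕ) * ((x:ℝ):ℂ) ^ (-s - (n:ℂ))) := by ring
      _ = c * u ^ n * P * (((x:ℝ):ℂ) ^ ((γ:ℂ) + n - 1))⁻¹ := by rw [h]
  rw [hcomb 1 (γ:ℂ) c₁ _ (by push_cast; ring),
      hcomb 2 ((γ:ℂ)+1) c₂ _ (by push_cast; ring),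
      hcomb 3 ((γ:ℂ)+2) c₃ _ (by push_cast; ring)]
  have hp2 : (∏ j ∈ range n, ((γ:ℂ) + 1 + j)) = ∏ j ∈ range n, ((γ:ℂ) + j + 1) :=
    prod_congr rfl (fun j _ => by ring)
  have hp3 : (∏ j ∈ range n, ((γ:ℂ) + 2 + j)) = ∏ j ∈ range n, ((γ:ℂ) + j + 2) :=
    prod_congr rfl (fun j _ => by ring)
  rw [hp2, hp3]
  simp only [hc1, hc2, hc3, prod_mul_distrib]
  set A := ∏ j ∈ range n, ((γ:ℂ) + j) with hA
  set B := ∏ j ∈ range n, ((γ:ℂ) + j + 1) with hB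
  set C := ∏ j ∈ range n, ((γ:ℂ) + j + 2) with hC
  set T := ((x:ℝ):ℂ) ^ ((γ:ℂ) + n - 1) with hTdef
  field_simp
  ring
end

section
/- Suppose the Stević–Sharma type operator T^n_{ψ₁,ψ₂,φ}: f ↦ ψ₁·(f^{(n)}∘φ) + ψ₂·(f^{(n+1)}∘φ) is bounded from a Banach space X of analytic functions on 𝔻 containing all polynomials into the weighted Bloch space B_μ. Then sup_{z∈𝔻} μ(z)|ψ₁'(z)| < ∞, sup_{z∈𝔻} μ(z)|ψ₁(z)φ'(z) + ψ₂'(z)| < ∞, and sup_{z∈𝔻} μ(z)|ψ₂(z)φ'(z)| < ∞. -/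
open Complex Metric Set

lemma iteratedDeriv_pow' (k m : ℕ) :
    iteratedDeriv m (fun z : ℂ => z ^ k) =
      fun z => (k.descFactorial m : ℂ) * z ^ (k - m) := by
  induction m with
  | zero => simp
  | succ m ih =>
    rw [iteratedDeriv_succ, ih]
    funext z
    rw [deriv_const_mul _ (differentiable_pow _).differentiableAt, deriv_pow_field]
    rw [Nat.descFactorial_succ, Nat.sub_sub]
    push_cast
    ring


/-- If the Stević–Sharma type operator `T^n_{ψ₁,ψ₂,φ}` is bounded from a Banach space `X`
of analytic functions containing the polynomials into the weighted Bloch space `B_μ`, then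
`μ|ψ₁'|`, `μ|ψ₁φ' + ψ₂'|` and `μ|ψ₂φ'|` are bounded on the disc. -/
theorem stevic_sharma_bounded_necessary
    (X : Type*) [NormedAddCommGroup X] [NormedSpace ℂ X] [CompleteSpace X]
    (ι : X →ₗ[ℂ] (ℂ → ℂ))
    (hana : ∀ f : X, DifferentiableOn ℂ (ι f) (ball (0:ℂ) 1))
    (hpoly : ∀ k : ℕ, ∃ p : X, ι p = fun z : ℂ => z ^ k)
    (ψ₁ ψ₂ φ : ℂ → ℂ)
    (hψ₁ : DifferentiableOn ℂ ψ₁ (ball (0:ℂ) 1))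
    (hψ₂ : DifferentiableOn ℂ ψ₂ (ball (0:ℂ) 1))
    (hφ : DifferentiableOn ℂ φ (ball (0:ℂ) 1))
    (hφself : ∀ z ∈ ball (0:ℂ) 1, φ z ∈ ball (0:ℂ) 1)
    (n : ℕ) (μ : ℂ → ℝ) (hμpos : ∀ z ∈ ball (0:ℂ) 1, 0 < μ z)
    (hμbd : ∃ Cμ : ℝ, ∀ z ∈ ball (0:ℂ) 1, μ z ≤ Cμ)
    -- boundedness of `T : X → B_μ`, where
    -- `(T f)(z) = ψ₁(z) f^{(n)}(φ(z)) + ψ₂(z) f^{(n+1)}(φ(z))`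
    (hbdd : ∃ C : ℝ, ∀ f : X, ∀ z ∈ ball (0:ℂ) 1,
      Norm.norm (ψ₁ 0 * iteratedDeriv n (ι f) (φ 0) +
          ψ₂ 0 * iteratedDeriv (n + 1) (ι f) (φ 0)) +
        μ z * Norm.norm (deriv (fun z => ψ₁ z * iteratedDeriv n (ι f) (φ z) +
          ψ₂ z * iteratedDeriv (n + 1) (ι f) (φ z)) z) ≤ C * ‖f‖) :
    BddAbove ((fun z => μ z * Norm.norm (deriv ψ₁ z)) '' ball (0:ℂ) 1) ∧
    BddAbove ((fun z => μ z * Norm.norm (ψ₁ z * deriv φ z + deriv ψ₂ z)) '' ball (0:ℂ) 1) ∧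
    BddAbove ((fun z => μ z * Norm.norm (ψ₂ z * deriv φ z)) '' ball (0:ℂ) 1) := by
  obtain ⟨C, hC⟩ := hbdd
  obtain ⟨p₀, hp₀⟩ := hpoly n
  obtain ⟨p₁, hp₁⟩ := hpoly (n + 1)
  obtain ⟨p₂, hp₂⟩ := hpoly (n + 2)
  have tri : ∀ x y : ℂ, Norm.norm (x - y) ≤ Norm.norm x + Norm.norm y := fun x y => by
    simpa [sub_eq_add_neg] using norm_add_le x (-y)
  set a₀ : ℕ := n.descFactorial n with ha₀def
  set a₁ : ℕ := (n + 1).descFactorial n with ha₁def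
  set a₂ : ℕ := (n + 2).descFactorial n with ha₂def
  have ha₀ : (0:ℝ) < (a₀:ℝ) := by
    have : a₀ ≠ 0 := by simp [ha₀def, Nat.descFactorial_eq_zero_iff_lt]
    positivity
  have ha₁ : (0:ℝ) < (a₁:ℝ) := by
    have : a₁ ≠ 0 := by
      simp only [ha₁def, ne_eq, Nat.descFactorial_eq_zero_iff_lt]; omega
    positivity
  have ha₂ : (0:ℝ) < (a₂:ℝ) := by
    have : a₂ ≠ 0 := by
      simp only [ha₂def, ne_eq, Nat.descFactorial_eq_zero_iff_lt]; omega
    positivity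
  have hb₁ : (((n + 1).descFactorial (n + 1) : ℕ) : ℂ) = (a₁ : ℂ) := by
    rw [Nat.descFactorial_succ, show n + 1 - n = 1 by omega, one_mul]
  have hb₂ : (((n + 2).descFactorial (n + 1) : ℕ) : ℂ) = 2 * (a₂ : ℂ) := by
    rw [Nat.descFactorial_succ, show n + 2 - n = 2 by omega]
    push_cast; ring
  set K₁ : ℝ := C * ‖p₀‖ / a₀ with hK₁
  set K₂ : ℝ := C * ‖p₁‖ / a₁ with hK₂
  set K₃ : ℝ := C * ‖p₂‖ / a₂ with hK₃
  -- first pointwise bound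
  have key₁ : ∀ z ∈ ball (0:ℂ) 1, μ z * Norm.norm (deriv ψ₁ z) ≤ K₁ := by
    intro z hz
    have hψ₁z : DifferentiableAt ℂ ψ₁ z := (hψ₁ z hz).differentiableAt (isOpen_ball.mem_nhds hz)
    have hfun : (fun w => ψ₁ w * iteratedDeriv n (ι p₀) (φ w)
        + ψ₂ w * iteratedDeriv (n + 1) (ι p₀) (φ w)) = fun w => (a₀ : ℂ) * ψ₁ w := by
      funext w
      rw [hp₀, iteratedDeriv_pow', iteratedDeriv_pow',
        show ((n.descFactorial (n + 1) : ℕ) : ℂ) = 0 by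
          norm_cast; simp [Nat.descFactorial_eq_zero_iff_lt],
        Nat.sub_self]
      ring
    have h := hC p₀ z hz
    rw [hfun, deriv_const_mul _ hψ₁z, norm_mul, Complex.norm_natCast] at h
    have h' : μ z * ((a₀ : ℝ) * Norm.norm (deriv ψ₁ z)) ≤ C * ‖p₀‖ :=
      (le_add_of_nonneg_left (norm_nonneg _)).trans h
    rw [hK₁, le_div_iff₀ ha₀]
    nlinarith [h']
  -- second pointwise bound (raw)
  have key₂ : ∀ z ∈ ball (0:ℂ) 1,
      μ z * Norm.norm (deriv ψ₁ z * φ z + (ψ₁ z * deriv φ z + deriv ψ₂ z)) ≤ K₂ := by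
    intro z hz
    have hmem := isOpen_ball.mem_nhds hz
    have hψ₁z : DifferentiableAt ℂ ψ₁ z := (hψ₁ z hz).differentiableAt hmem
    have hψ₂z : DifferentiableAt ℂ ψ₂ z := (hψ₂ z hz).differentiableAt hmem
    have hφz : DifferentiableAt ℂ φ z := (hφ z hz).differentiableAt hmem
    have hfun : (fun w => ψ₁ w * iteratedDeriv n (ι p₁) (φ w)
        + ψ₂ w * iteratedDeriv (n + 1) (ι p₁) (φ w))
        = fun w => (a₁ : ℂ) * (ψ₁ w * φ w + ψ₂ w) := by
      funext w
      rw [hp₁, iteratedDeriv_pow', iteratedDeriv_pow', hb₁,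
        show n + 1 - n = 1 by omega, Nat.sub_self]
      ring
    have h := hC p₁ z hz
    rw [hfun, deriv_const_mul _ ((hψ₁z.fun_mul hφz).fun_add hψ₂z),
      deriv_fun_add (hψ₁z.fun_mul hφz) hψ₂z, deriv_fun_mul hψ₁z hφz,
      norm_mul, Complex.norm_natCast] at h
    have h' : μ z * ((a₁ : ℝ) *
        Norm.norm (deriv ψ₁ z * φ z + (ψ₁ z * deriv φ z + deriv ψ₂ z))) ≤ C * ‖p₁‖ := by
      have := (le_add_of_nonneg_left (norm_nonneg _)).trans h
      convert this using 4
      all_goals first | rfl | ring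
    rw [hK₂, le_div_iff₀ ha₁]
    nlinarith [h']
  -- derived second bound
  have key₂' : ∀ z ∈ ball (0:ℂ) 1,
      μ z * Norm.norm (ψ₁ z * deriv φ z + deriv ψ₂ z) ≤ K₂ + K₁ := by
    intro z hz
    have hμ0 : (0:ℝ) ≤ μ z := (hμpos z hz).le
    have hφ1 : Norm.norm (φ z) ≤ 1 := by
      have := mem_ball_zero_iff.mp (hφself z hz)
      simpa using this.le
    have t : Norm.norm (ψ₁ z * deriv φ z + deriv ψ₂ z) ≤
        Norm.norm (deriv ψ₁ z * φ z + (ψ₁ z * deriv φ z + deriv ψ₂ z))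
          + Norm.norm (deriv ψ₁ z) * Norm.norm (φ z) := by
      have := tri (deriv ψ₁ z * φ z + (ψ₁ z * deriv φ z + deriv ψ₂ z)) (deriv ψ₁ z * φ z)
      rw [add_sub_cancel_left, norm_mul] at this
      exact this
    have h1 := key₁ z hz
    have h2 := key₂ z hz
    have hK₁0 : (0:ℝ) ≤ K₁ := le_trans (mul_nonneg hμ0 (norm_nonneg _)) h1
    have step := mul_le_mul_of_nonneg_left t hμ0
    have s1 : μ z * Norm.norm (deriv ψ₁ z) * Norm.norm (φ z) ≤ K₁ * 1 :=
      mul_le_mul h1 hφ1 (norm_nonneg _) hK₁0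
    nlinarith [step, s1, h2]
  -- third pointwise bound (raw)
  have key₃ : ∀ z ∈ ball (0:ℂ) 1,
      μ z * Norm.norm (deriv ψ₁ z * (φ z * φ z)
        + 2 * φ z * (ψ₁ z * deriv φ z + deriv ψ₂ z)
        + 2 * (ψ₂ z * deriv φ z)) ≤ K₃ := by
    intro z hz
    have hmem := isOpen_ball.mem_nhds hz
    have hψ₁z : DifferentiableAt ℂ ψ₁ z := (hψ₁ z hz).differentiableAt hmem
    have hψ₂z : DifferentiableAt ℂ ψ₂ z := (hψ₂ z hz).differentiableAt hmem
    have hφz : DifferentiableAt ℂ φ z := (hφ z hz).differentiableAt hmem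
    have hfun : (fun w => ψ₁ w * iteratedDeriv n (ι p₂) (φ w)
        + ψ₂ w * iteratedDeriv (n + 1) (ι p₂) (φ w))
        = fun w => (a₂ : ℂ) * (ψ₁ w * (φ w * φ w) + 2 * (ψ₂ w * φ w)) := by
      funext w
      rw [hp₂, iteratedDeriv_pow', iteratedDeriv_pow', hb₂,
        show n + 2 - n = 2 by omega, show n + 2 - (n + 1) = 1 by omega]
      ring
    have h := hC p₂ z hz
    rw [hfun, deriv_const_mul _ ((hψ₁z.fun_mul (hφz.fun_mul hφz)).fun_add
        ((differentiableAt_const _).fun_mul (hψ₂z.fun_mul hφz))),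
      deriv_fun_add (hψ₁z.fun_mul (hφz.fun_mul hφz)) ((differentiableAt_const _).fun_mul (hψ₂z.fun_mul hφz)),
      deriv_fun_mul hψ₁z (hφz.fun_mul hφz), deriv_fun_mul hφz hφz,
      deriv_const_mul _ (hψ₂z.fun_mul hφz), deriv_fun_mul hψ₂z hφz,
      norm_mul, Complex.norm_natCast] at h
    have h' : μ z * ((a₂ : ℝ) * Norm.norm (deriv ψ₁ z * (φ z * φ z)
        + 2 * φ z * (ψ₁ z * deriv φ z + deriv ψ₂ z)
        + 2 * (ψ₂ z * deriv φ z))) ≤ C * ‖p₂‖ := by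
      have := (le_add_of_nonneg_left (norm_nonneg _)).trans h
      convert this using 4
      all_goals first | rfl | ring
    rw [hK₃, le_div_iff₀ ha₂]
    nlinarith [h']
  -- derived third bound
  have key₃' : ∀ z ∈ ball (0:ℂ) 1,
      μ z * Norm.norm (ψ₂ z * deriv φ z) ≤ K₃ + K₁ + 2 * (K₂ + K₁) := by
    intro z hz
    have hμ0 : (0:ℝ) ≤ μ z := (hμpos z hz).le
    have hφ1 : Norm.norm (φ z) ≤ 1 := by
      have := mem_ball_zero_iff.mp (hφself z hz)
      simpa using this.le
    set S : ℂ := deriv ψ₁ z * (φ z * φ z)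
        + 2 * φ z * (ψ₁ z * deriv φ z + deriv ψ₂ z) + 2 * (ψ₂ z * deriv φ z) with hS
    have t : 2 * Norm.norm (ψ₂ z * deriv φ z) ≤
        Norm.norm S + Norm.norm (deriv ψ₁ z) * (Norm.norm (φ z) * Norm.norm (φ z))
          + 2 * (Norm.norm (φ z) * Norm.norm (ψ₁ z * deriv φ z + deriv ψ₂ z)) := by
      have t1 := tri (S - deriv ψ₁ z * (φ z * φ z)) (2 * φ z * (ψ₁ z * deriv φ z + deriv ψ₂ z))
      have t2 := tri S (deriv ψ₁ z * (φ z * φ z))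
      have he : S - deriv ψ₁ z * (φ z * φ z) - 2 * φ z * (ψ₁ z * deriv φ z + deriv ψ₂ z)
          = 2 * (ψ₂ z * deriv φ z) := by rw [hS]; ring
      rw [he] at t1
      have ha : Norm.norm (2 * (ψ₂ z * deriv φ z)) = 2 * Norm.norm (ψ₂ z * deriv φ z) := by
        rw [norm_mul, Complex.norm_two]
      have hb : Norm.norm (deriv ψ₁ z * (φ z * φ z))
          = Norm.norm (deriv ψ₁ z) * (Norm.norm (φ z) * Norm.norm (φ z)) := by
        rw [norm_mul, norm_mul]
      have hc : Norm.norm (2 * φ z * (ψ₁ z * deriv φ z + deriv ψ₂ z))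
          = 2 * (Norm.norm (φ z) * Norm.norm (ψ₁ z * deriv φ z + deriv ψ₂ z)) := by
        rw [norm_mul, norm_mul, Complex.norm_two]; ring
      rw [ha] at t1
      rw [hb] at t2
      rw [hc] at t1
      linarith
    have h1 := key₁ z hz
    have h2 := key₂' z hz
    have h3 := key₃ z hz
    rw [← hS] at h3
    have habs0 : (0:ℝ) ≤ Norm.norm (ψ₂ z * deriv φ z) := norm_nonneg _
    have step := mul_le_mul_of_nonneg_left t hμ0
    have hK₁0 : (0:ℝ) ≤ K₁ := le_trans (mul_nonneg hμ0 (norm_nonneg _)) h1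
    have hφφ : Norm.norm (φ z) * Norm.norm (φ z) ≤ 1 := by
      nlinarith [norm_nonneg (φ z)]
    have s1 : μ z * Norm.norm (deriv ψ₁ z) * (Norm.norm (φ z) * Norm.norm (φ z))
        ≤ K₁ * 1 := mul_le_mul h1 hφφ
      (mul_nonneg (norm_nonneg _) (norm_nonneg _)) hK₁0
    have hE0 : (0:ℝ) ≤ μ z * Norm.norm (ψ₁ z * deriv φ z + deriv ψ₂ z) :=
      mul_nonneg hμ0 (norm_nonneg _)
    have s2 : Norm.norm (φ z) * (μ z * Norm.norm (ψ₁ z * deriv φ z + deriv ψ₂ z))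
        ≤ 1 * (K₂ + K₁) := mul_le_mul hφ1 h2 hE0 zero_le_one
    have hG0 : (0:ℝ) ≤ μ z * Norm.norm (ψ₂ z * deriv φ z) := mul_nonneg hμ0 habs0
    nlinarith [step, h3, s1, s2, hG0]
  refine ⟨⟨K₁, ?_⟩, ⟨K₂ + K₁, ?_⟩, ⟨K₃ + K₁ + 2 * (K₂ + K₁), ?_⟩⟩
  · rintro x ⟨z, hz, rfl⟩; exact key₁ z hz
  · rintro x ⟨z, hz, rfl⟩; exact key₂' z hz
  · rintro x ⟨z, hz, rfl⟩; exact key₃' z hz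
end

section
/- Let ψ₁, ψ₂ be analytic on 𝔻, φ an analytic self-map of 𝔻 with ρ = sup_{z∈𝔻}|φ(z)| < 1, n ∈ ℕ, and μ a positive weight with sup_{z∈𝔻} μ(z)|ψ₁'(z)| < ∞, sup_{z∈𝔻} μ(z)|ψ₁(z)φ'(z)+ψ₂'(z)| < ∞, sup_{z∈𝔻} μ(z)|ψ₂(z)φ'(z)| < ∞. If {f_i} is a sequence of analytic functions on 𝔻, uniformly bounded on the closed disc of radius (1+ρ)/2 and converging to 0 uniformly on compact subsets of 𝔻, then ‖T^n_{ψ₁,ψ₂,φ} f_i‖_{B_μ} → 0 as i → ∞, where (T^n_{ψ₁,ψ₂,φ} f)(z) = ψ₁(z) f^{(n)}(φ(z)) + ψ₂(z) f^{(n+1)}(φ(z)). -/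
open Complex Metric Set Filter

lemma iter_aux (f : ℕ → ℂ → ℂ) (hf : ∀ i, DifferentiableOn ℂ (f i) (ball (0:ℂ) 1))
    (hloc : TendstoLocallyUniformlyOn f 0 atTop (ball (0:ℂ) 1)) (k : ℕ) :
    (∀ i, DifferentiableOn ℂ (iteratedDeriv k (f i)) (ball (0:ℂ) 1)) ∧
    TendstoLocallyUniformlyOn (fun i => iteratedDeriv k (f i)) 0 atTop (ball (0:ℂ) 1) := by
  induction k with
  | zero => simpa [iteratedDeriv_zero] using ⟨hf, hloc⟩
  | succ k ih =>
    obtain ⟨hd, hl⟩ := ih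
    have hzero : deriv (0 : ℂ → ℂ) = 0 := by
      funext x; simp [Pi.zero_def]
    constructor
    · intro i
      simp only [iteratedDeriv_succ]
      exact (((hd i).analyticOnNhd isOpen_ball).deriv).differentiableOn
    · have := hl.deriv (Eventually.of_forall hd) isOpen_ball
      rw [hzero] at this
      simpa [iteratedDeriv_succ, Function.comp_def] using this

/-- If `ρ = sup |φ| < 1`, the symbols satisfy the natural weighted boundedness conditions,
and `{f_i}` is bounded on the disc of radius `(1+ρ)/2` and tends to `0` uniformly on compact
subsets of `𝔻`, then `‖T^n_{ψ₁,ψ₂,φ} f_i‖_{B_μ} → 0`. -/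
theorem stevic_sharma_compact_small_rho (ψ₁ ψ₂ φ : ℂ → ℂ)
    (hψ₁ : DifferentiableOn ℂ ψ₁ (ball (0:ℂ) 1))
    (hψ₂ : DifferentiableOn ℂ ψ₂ (ball (0:ℂ) 1))
    (hφ : DifferentiableOn ℂ φ (ball (0:ℂ) 1))
    (ρ : ℝ) (hρ : ρ < 1) (hρ0 : 0 ≤ ρ)
    (hφρ : ∀ z ∈ ball (0:ℂ) 1, ‖(φ z)‖ ≤ ρ)
    (n : ℕ) (μ : ℂ → ℝ) (hμpos : ∀ z ∈ ball (0:ℂ) 1, 0 < μ z)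
    (h1 : ∃ C₁ : ℝ, ∀ z ∈ ball (0:ℂ) 1, μ z * ‖(deriv ψ₁ z)‖ ≤ C₁)
    (h2 : ∃ C₂ : ℝ, ∀ z ∈ ball (0:ℂ) 1,
      μ z * ‖(ψ₁ z * deriv φ z + deriv ψ₂ z)‖ ≤ C₂)
    (h3 : ∃ C₃ : ℝ, ∀ z ∈ ball (0:ℂ) 1, μ z * ‖(ψ₂ z * deriv φ z)‖ ≤ C₃)
    (f : ℕ → ℂ → ℂ) (hf : ∀ i, DifferentiableOn ℂ (f i) (ball (0:ℂ) 1))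
    (hbd : ∃ B : ℝ, ∀ i, ∀ z ∈ closedBall (0:ℂ) ((1 + ρ) / 2),
      ‖(f i z)‖ ≤ B)
    (hconv : ∀ K ⊆ ball (0:ℂ) 1, IsCompact K → TendstoUniformlyOn f 0 atTop K) :
    ∀ ε > 0, ∃ N : ℕ, ∀ i ≥ N,
      ‖(ψ₁ 0 * iteratedDeriv n (f i) (φ 0) +
          ψ₂ 0 * iteratedDeriv (n + 1) (f i) (φ 0))‖ < ε ∧
      ∀ z ∈ ball (0:ℂ) 1,
        μ z * ‖(deriv (fun z => ψ₁ z * iteratedDeriv n (f i) (φ z) +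
            ψ₂ z * iteratedDeriv (n + 1) (f i) (φ z)) z)‖ < ε := by
  obtain ⟨C₁, hC₁⟩ := h1
  obtain ⟨C₂, hC₂⟩ := h2
  obtain ⟨C₃, hC₃⟩ := h3
  have h01 : (0:ℂ) ∈ ball (0:ℂ) 1 := by simp
  have hμ0 := hμpos 0 h01
  have hC₁0 : 0 ≤ C₁ :=
    le_trans (mul_nonneg hμ0.le (norm_nonneg _)) (hC₁ 0 h01)
  have hC₂0 : 0 ≤ C₂ :=
    le_trans (mul_nonneg hμ0.le (norm_nonneg _)) (hC₂ 0 h01)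
  have hC₃0 : 0 ≤ C₃ :=
    le_trans (mul_nonneg hμ0.le (norm_nonneg _)) (hC₃ 0 h01)
  set C : ℝ := ‖ψ₁ 0‖ + ‖ψ₂ 0‖ + C₁ + C₂ + C₃ + 1 with hC
  have hCpos : 0 < C := by positivity
  -- locally uniform convergence and its consequences
  have hloc : TendstoLocallyUniformlyOn f 0 atTop (ball (0:ℂ) 1) :=
    (tendstoLocallyUniformlyOn_iff_forall_isCompact isOpen_ball).2
      (fun K hK hK' => hconv K hK hK')
  have hKsub : closedBall (0:ℂ) ρ ⊆ ball (0:ℂ) 1 := closedBall_subset_ball hρ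
  have hK : IsCompact (closedBall (0:ℂ) ρ) := isCompact_closedBall _ _
  have hU : ∀ k : ℕ, TendstoUniformlyOn (fun i => iteratedDeriv k (f i)) 0 atTop
      (closedBall (0:ℂ) ρ) := fun k =>
    (tendstoLocallyUniformlyOn_iff_forall_isCompact isOpen_ball).1
      (iter_aux f hf hloc k).2 _ hKsub hK
  have hdk : ∀ k i, DifferentiableOn ℂ (iteratedDeriv k (f i)) (ball (0:ℂ) 1) :=
    fun k => (iter_aux f hf hloc k).1
  intro ε hε
  set δ : ℝ := ε / C with hδdef
  have hδ : 0 < δ := div_pos hε hCpos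
  have hCδ : C * δ = ε := by rw [hδdef]; field_simp [hCpos.ne']
  -- pick N working for k = n, n+1, n+2
  have hev : ∀ᶠ i in atTop, ∀ k ∈ ({n, n+1, n+2} : Finset ℕ),
      ∀ w ∈ closedBall (0:ℂ) ρ, ‖iteratedDeriv k (f i) w‖ < δ := by
    rw [eventually_all_finset]
    intro k _
    filter_upwards [Metric.tendstoUniformlyOn_iff.1 (hU k) δ hδ] with i hi w hw
    have := hi w hw
    simpa [dist_eq_norm] using this
  obtain ⟨N, hN⟩ := eventually_atTop.1 hev
  refine ⟨N, fun i hi => ?_⟩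
  have hsm : ∀ k ∈ ({n, n+1, n+2} : Finset ℕ), ∀ w ∈ closedBall (0:ℂ) ρ,
      ‖iteratedDeriv k (f i) w‖ < δ := hN i hi
  have hnm : n ∈ ({n, n+1, n+2} : Finset ℕ) := by simp
  have hn1m : n+1 ∈ ({n, n+1, n+2} : Finset ℕ) := by simp
  have hn2m : n+2 ∈ ({n, n+1, n+2} : Finset ℕ) := by simp
  have hφmem : ∀ z ∈ ball (0:ℂ) 1, φ z ∈ closedBall (0:ℂ) ρ := fun z hz =>
    mem_closedBall_zero_iff.2 (hφρ z hz)
  constructor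
  · have hF := hsm n hnm (φ 0) (hφmem 0 h01)
    have hG := hsm (n+1) hn1m (φ 0) (hφmem 0 h01)
    calc ‖ψ₁ 0 * iteratedDeriv n (f i) (φ 0) +
          ψ₂ 0 * iteratedDeriv (n + 1) (f i) (φ 0)‖
        ≤ ‖ψ₁ 0‖ * ‖iteratedDeriv n (f i) (φ 0)‖ +
          ‖ψ₂ 0‖ * ‖iteratedDeriv (n+1) (f i) (φ 0)‖ := by
          simpa [norm_mul] using
            (norm_add_le (ψ₁ 0 * iteratedDeriv n (f i) (φ 0))
              (ψ₂ 0 * iteratedDeriv (n + 1) (f i) (φ 0)))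
      _ ≤ ‖ψ₁ 0‖ * δ + ‖ψ₂ 0‖ * δ := by
          gcongr <;> first | exact hF.le | exact hG.le
      _ < C * δ := by
          have hlt : ‖ψ₁ 0‖ + ‖ψ₂ 0‖ < C := by
            simp only [hC]; linarith
          nlinarith [hδ]
      _ = ε := hCδ
  · intro z hz
    have hzw : φ z ∈ closedBall (0:ℂ) ρ := hφmem z hz
    have hzw1 : φ z ∈ ball (0:ℂ) 1 := hKsub hzw
    have hψ₁z : DifferentiableAt ℂ ψ₁ z := hψ₁.differentiableAt (isOpen_ball.mem_nhds hz)
    have hψ₂z : DifferentiableAt ℂ ψ₂ z := hψ₂.differentiableAt (isOpen_ball.mem_nhds hz)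
    have hφz : DifferentiableAt ℂ φ z := hφ.differentiableAt (isOpen_ball.mem_nhds hz)
    have hFw : DifferentiableAt ℂ (iteratedDeriv n (f i)) (φ z) :=
      (hdk n i).differentiableAt (isOpen_ball.mem_nhds hzw1)
    have hGw : DifferentiableAt ℂ (iteratedDeriv (n+1) (f i)) (φ z) :=
      (hdk (n+1) i).differentiableAt (isOpen_ball.mem_nhds hzw1)
    have hc1 : DifferentiableAt ℂ (fun z => iteratedDeriv n (f i) (φ z)) z := hFw.comp z hφz
    have hc2 : DifferentiableAt ℂ (fun z => iteratedDeriv (n+1) (f i) (φ z)) z := hGw.comp z hφz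
    have hdF : deriv (iteratedDeriv n (f i)) = iteratedDeriv (n+1) (f i) :=
      (iteratedDeriv_succ).symm
    have hdG : deriv (iteratedDeriv (n+1) (f i)) = iteratedDeriv (n+2) (f i) :=
      (iteratedDeriv_succ).symm
    have hderiv : deriv (fun z => ψ₁ z * iteratedDeriv n (f i) (φ z) +
        ψ₂ z * iteratedDeriv (n + 1) (f i) (φ z)) z
        = deriv ψ₁ z * iteratedDeriv n (f i) (φ z)
          + (ψ₁ z * deriv φ z + deriv ψ₂ z) * iteratedDeriv (n+1) (f i) (φ z)
          + (ψ₂ z * deriv φ z) * iteratedDeriv (n+2) (f i) (φ z) := by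
      rw [deriv_fun_add (hψ₁z.fun_mul hc1) (hψ₂z.fun_mul hc2), deriv_fun_mul hψ₁z hc1, deriv_fun_mul hψ₂z hc2,
        show deriv (fun x => iteratedDeriv n (f i) (φ x)) z
          = deriv (iteratedDeriv n (f i)) (φ z) * deriv φ z from deriv_comp (x := z) hFw hφz,
        show deriv (fun x => iteratedDeriv (n+1) (f i) (φ x)) z
          = deriv (iteratedDeriv (n+1) (f i)) (φ z) * deriv φ z from deriv_comp (x := z) hGw hφz,
        hdF, hdG]
      ring
    rw [hderiv]
    have hF := (hsm n hnm (φ z) hzw).le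
    have hG := (hsm (n+1) hn1m (φ z) hzw).le
    have hH := (hsm (n+2) hn2m (φ z) hzw).le
    have hμz := (hμpos z hz).le
    have habs : ‖deriv ψ₁ z * iteratedDeriv n (f i) (φ z)
          + (ψ₁ z * deriv φ z + deriv ψ₂ z) * iteratedDeriv (n+1) (f i) (φ z)
          + (ψ₂ z * deriv φ z) * iteratedDeriv (n+2) (f i) (φ z)‖
        ≤ ‖deriv ψ₁ z‖ * ‖iteratedDeriv n (f i) (φ z)‖
          + ‖ψ₁ z * deriv φ z + deriv ψ₂ z‖ *
            ‖iteratedDeriv (n+1) (f i) (φ z)‖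
          + ‖ψ₂ z * deriv φ z‖ *
            ‖iteratedDeriv (n+2) (f i) (φ z)‖ := by
      calc ‖_‖ ≤ ‖deriv ψ₁ z * iteratedDeriv n (f i) (φ z)
            + (ψ₁ z * deriv φ z + deriv ψ₂ z) * iteratedDeriv (n+1) (f i) (φ z)‖
            + ‖(ψ₂ z * deriv φ z) * iteratedDeriv (n+2) (f i) (φ z)‖ :=
          norm_add_le _ _
        _ ≤ _ := by
          rw [norm_mul, norm_mul]
          have := norm_add_le
            (deriv ψ₁ z * iteratedDeriv n (f i) (φ z))
            ((ψ₁ z * deriv φ z + deriv ψ₂ z) * iteratedDeriv (n+1) (f i) (φ z))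
          rw [norm_mul, norm_mul] at this
          linarith
    calc μ z * ‖_‖
        ≤ (μ z * ‖deriv ψ₁ z‖) * ‖iteratedDeriv n (f i) (φ z)‖
          + (μ z * ‖ψ₁ z * deriv φ z + deriv ψ₂ z‖) *
            ‖iteratedDeriv (n+1) (f i) (φ z)‖
          + (μ z * ‖ψ₂ z * deriv φ z‖) *
            ‖iteratedDeriv (n+2) (f i) (φ z)‖ := by
          have := mul_le_mul_of_nonneg_left habs hμz
          linarith [this]
      _ ≤ C₁ * δ + C₂ * δ + C₃ * δ := by
          gcongr <;> first
            | exact hC₁ z hz | exact hC₂ z hz | exact hC₃ z hz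
            | exact hF | exact hG | exact hH
            | exact mul_nonneg hμz (norm_nonneg _)
            | exact norm_nonneg _
      _ < C * δ := by
          have hlt : C₁ + C₂ + C₃ < C := by
            simp only [hC]
            have := norm_nonneg (ψ₁ 0)
            have := norm_nonneg (ψ₂ 0)
            linarith
          nlinarith [hδ]
      _ = ε := hCδ
end

section
/- Fix w ∈ 𝔻 and integers m ≥ 0, n ≥ 1 with m+1 < n. For each i ∈ {m, m+1, n, n+1} there exists g_i ∈ H^∞(𝔻) with ‖g_i‖_∞ bounded by a constant independent of w, such that for all j ∈ {m, m+1, n, n+1}: g_i^{(j)}(w) = conj(w)^j·δ_{ij}/(1-|w|²)^j (that is, g_i^{(i)}(w) = conj(w)^i/(1-|w|²)^i and g_i^{(j)}(w) = 0 for j ≠ i in the index set). -/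
open Complex Metric Set Finset

noncomputable def FF (c K1 K2 K3 K4 : ℂ) (j : ℕ) : ℂ → ℂ := fun z =>
  c ^ j * ((∏ l ∈ Finset.range j, ((1:ℂ) + l)) * K1 * (1 - c * z) ^ (-1 - (j:ℤ))
    + (∏ l ∈ Finset.range j, ((2:ℂ) + l)) * K2 * (1 - c * z) ^ (-2 - (j:ℤ))
    + (∏ l ∈ Finset.range j, ((3:ℂ) + l)) * K3 * (1 - c * z) ^ (-3 - (j:ℤ))
    + (∏ l ∈ Finset.range j, ((4:ℂ) + l)) * K4 * (1 - c * z) ^ (-4 - (j:ℤ)))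

lemma hd_term (c z A : ℂ) (e : ℤ) (hz : 1 - c * z ≠ 0) :
    HasDerivAt (fun z : ℂ => A * (1 - c * z) ^ e)
      (A * ((e : ℂ) * (1 - c * z) ^ (e - 1) * (-c))) z := by
  have h1 : HasDerivAt (fun z : ℂ => 1 - c * z) (-c) z := by
    simpa using (HasDerivAt.const_sub (1:ℂ) ((hasDerivAt_id z).const_mul c))
  have h2 : HasDerivAt (fun y : ℂ => y ^ e) ((e : ℂ) * (1 - c * z) ^ (e - 1)) (1 - c * z) :=
    hasDerivAt_zpow e _ (Or.inl hz)
  exact (h2.comp z h1).const_mul A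

lemma hd_FF (c K1 K2 K3 K4 : ℂ) (j : ℕ) (z : ℂ) (hz : 1 - c * z ≠ 0) :
    HasDerivAt (FF c K1 K2 K3 K4 j)
      (c ^ j *
        (((∏ l ∈ Finset.range j, ((1:ℂ) + l)) * K1 * (((-1 - (j:ℤ)) : ℤ) * (1 - c * z) ^ ((-1 - (j:ℤ)) - 1) * (-c)))
        + ((∏ l ∈ Finset.range j, ((2:ℂ) + l)) * K2 * (((-2 - (j:ℤ)) : ℤ) * (1 - c * z) ^ ((-2 - (j:ℤ)) - 1) * (-c)))
        + ((∏ l ∈ Finset.range j, ((3:ℂ) + l)) * K3 * (((-3 - (j:ℤ)) : ℤ) * (1 - c * z) ^ ((-3 - (j:ℤ)) - 1) * (-c)))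
        + ((∏ l ∈ Finset.range j, ((4:ℂ) + l)) * K4 * (((-4 - (j:ℤ)) : ℤ) * (1 - c * z) ^ ((-4 - (j:ℤ)) - 1) * (-c))))) z := by
  exact ((((hd_term c z _ _ hz).add (hd_term c z _ _ hz)).add (hd_term c z _ _ hz)).add
    (hd_term c z _ _ hz)).const_mul (c ^ j)

lemma prod_shift (x : ℂ) (j : ℕ) :
    (x * ∏ l ∈ Finset.range j, (x + 1 + l)) = (x + j) * ∏ l ∈ Finset.range j, (x + l) := by
  induction j with
  | zero => simp
  | succ j IH =>
    rw [Finset.prod_range_succ, Finset.prod_range_succ]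
    push_cast
    linear_combination (x + 1 + j) * IH

lemma prod_one_factorial (j : ℕ) :
    (∏ l ∈ Finset.range j, ((1 : ℂ) + l)) = (j.factorial : ℂ) := by
  induction j with
  | zero => simp
  | succ j IH => rw [Finset.prod_range_succ, IH, Nat.factorial_succ]; push_cast; ring

lemma prodP2 (j : ℕ) :
    (∏ l ∈ Finset.range j, ((2:ℂ) + l)) = (1 + (j:ℂ)) * ∏ l ∈ Finset.range j, ((1:ℂ) + l) := by
  have h := prod_shift 1 j
  have h2 : (∏ l ∈ Finset.range j, ((1:ℂ) + 1 + l)) = ∏ l ∈ Finset.range j, ((2:ℂ) + l) :=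
    Finset.prod_congr rfl (fun l _ => by ring)
  rw [h2] at h
  linear_combination h

lemma prodP3 (j : ℕ) :
    (∏ l ∈ Finset.range j, ((3:ℂ) + l)) = (2 + (j:ℂ)) * (∏ l ∈ Finset.range j, ((2:ℂ) + l)) / 2 := by
  have h := prod_shift 2 j
  have h2 : (∏ l ∈ Finset.range j, ((2:ℂ) + 1 + l)) = ∏ l ∈ Finset.range j, ((3:ℂ) + l) :=
    Finset.prod_congr rfl (fun l _ => by ring)
  rw [h2] at h
  linear_combination h / 2

lemma prodP4 (j : ℕ) :
    (∏ l ∈ Finset.range j, ((4:ℂ) + l)) = (3 + (j:ℂ)) * (∏ l ∈ Finset.range j, ((3:ℂ) + l)) / 3 := by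
  have h := prod_shift 3 j
  have h2 : (∏ l ∈ Finset.range j, ((3:ℂ) + 1 + l)) = ∏ l ∈ Finset.range j, ((4:ℂ) + l) :=
    Finset.prod_congr rfl (fun l _ => by ring)
  rw [h2] at h
  linear_combination h / 3

lemma iter_deriv_formula (c K1 K2 K3 K4 : ℂ) (j : ℕ) :
    ∀ z : ℂ, 1 - c * z ≠ 0 →
      iteratedDeriv j (FF c K1 K2 K3 K4 0) z = FF c K1 K2 K3 K4 j z := by
  induction j with
  | zero => intro z _; simp [iteratedDeriv_zero]
  | succ j IH =>
    intro z hz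
    have hU : IsOpen {y : ℂ | 1 - c * y ≠ 0} := by
      have hc : Continuous fun y : ℂ => 1 - c * y := by continuity
      exact isOpen_compl_singleton.preimage hc
    have hev : iteratedDeriv j (FF c K1 K2 K3 K4 0) =ᶠ[nhds z] FF c K1 K2 K3 K4 j :=
      Filter.eventuallyEq_of_mem (hU.mem_nhds hz) (fun y hy => IH y hy)
    rw [iteratedDeriv_succ, hev.deriv_eq, (hd_FF c K1 K2 K3 K4 j z hz).deriv]
    show _ = FF c K1 K2 K3 K4 (j+1) z
    unfold FF
    simp only [Finset.prod_range_succ]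
    have e1 : (-1 - ((j+1 : ℕ):ℤ)) = (-1 - (j:ℤ)) - 1 := by push_cast; ring
    have e2 : (-2 - ((j+1 : ℕ):ℤ)) = (-2 - (j:ℤ)) - 1 := by push_cast; ring
    have e3 : (-3 - ((j+1 : ℕ):ℤ)) = (-3 - (j:ℤ)) - 1 := by push_cast; ring
    have e4 : (-4 - ((j+1 : ℕ):ℤ)) = (-4 - (j:ℤ)) - 1 := by push_cast; ring
    rw [e1, e2, e3, e4]
    push_cast
    ring

lemma lagrange4 (i j1 j2 j3 : ℂ) (h1 : i - j1 ≠ 0) (h2 : i - j2 ≠ 0) (h3 : i - j3 ≠ 0) :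
    ∃ b1 b2 b3 b4 : ℂ, ∀ x : ℂ,
      b1 + b2 * (1 + x) + b3 * ((1 + x) * (2 + x)) / 2 + b4 * ((1 + x) * (2 + x) * (3 + x)) / 6
        = (x - j1) * (x - j2) * (x - j3) / ((i - j1) * (i - j2) * (i - j3)) := by
  set D := (i - j1) * (i - j2) * (i - j3) with hD
  have hDne : D ≠ 0 := mul_ne_zero (mul_ne_zero h1 h2) h3
  refine ⟨(-(j1*j2*j3) - (j1*j2 + j1*j3 + j2*j3) - (j1 + j2 + j3) - 1) / D,
    ((j1*j2 + j1*j3 + j2*j3) + 3*(j1 + j2 + j3) + 7) / D,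
    (-2*(j1 + j2 + j3) - 12) / D, 6 / D, fun x => ?_⟩
  field_simp
  ring

set_option maxHeartbeats 1000000 in
lemma main_aux (w : ℂ) (hw : ‖w‖ < 1) (i j1 j2 j3 : ℕ)
    (b1 b2 b3 b4 : ℂ) (hd1 : i ≠ j1) (hd2 : i ≠ j2) (hd3 : i ≠ j3)
    (hE : ∀ x : ℂ, b1 + b2 * (1 + x) + b3 * ((1 + x) * (2 + x)) / 2
        + b4 * ((1 + x) * (2 + x) * (3 + x)) / 6
      = (x - (j1:ℂ)) * (x - (j2:ℂ)) * (x - (j3:ℂ))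
          / (((i:ℂ) - (j1:ℂ)) * ((i:ℂ) - (j2:ℂ)) * ((i:ℂ) - (j3:ℂ)))) :
    ∃ g : ℂ → ℂ, DifferentiableOn ℂ g (ball (0:ℂ) 1) ∧
      (∀ z ∈ ball (0:ℂ) 1, ‖g z‖ ≤
        16 * (‖b1‖ + ‖b2‖ + ‖b3‖ + ‖b4‖)) ∧
      ∀ j : ℕ, (j = i ∨ j = j1 ∨ j = j2 ∨ j = j3) →
        iteratedDeriv j g w =
          if j = i then ((starRingEnd ℂ) w) ^ i / ((1 - ‖w‖ ^ 2 : ℝ) : ℂ) ^ i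
          else 0 := by
  obtain ⟨c, hc⟩ : ∃ c : ℂ, c = (starRingEnd ℂ) w := ⟨_, rfl⟩
  obtain ⟨ρ, hρdef⟩ : ∃ r : ℝ, r = 1 - ‖w‖ ^ 2 := ⟨_, rfl⟩
  rw [← hc, ← hρdef]
  have habsw : 0 ≤ ‖w‖ := norm_nonneg w
  have hρpos : 0 < ρ := by rw [hρdef]; nlinarith
  have hρC : ((ρ:ℝ):ℂ) ≠ 0 := Complex.ofReal_ne_zero.mpr (ne_of_gt hρpos)
  have hfacne : (i.factorial : ℂ) ≠ 0 := by
    exact_mod_cast Nat.cast_ne_zero.mpr (Nat.factorial_ne_zero i)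
  obtain ⟨K1, hK1⟩ : ∃ k : ℂ, k = b1 * ((ρ:ℝ):ℂ) ^ (1:ℕ) / (i.factorial : ℂ) := ⟨_, rfl⟩
  obtain ⟨K2, hK2⟩ : ∃ k : ℂ, k = b2 * ((ρ:ℝ):ℂ) ^ (2:ℕ) / (i.factorial : ℂ) := ⟨_, rfl⟩
  obtain ⟨K3, hK3⟩ : ∃ k : ℂ, k = b3 * ((ρ:ℝ):ℂ) ^ (3:ℕ) / (i.factorial : ℂ) := ⟨_, rfl⟩
  obtain ⟨K4, hK4⟩ : ∃ k : ℂ, k = b4 * ((ρ:ℝ):ℂ) ^ (4:ℕ) / (i.factorial : ℂ) := ⟨_, rfl⟩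
  have hne : ∀ z ∈ ball (0:ℂ) 1, 1 - c * z ≠ 0 := by
    intro z hz
    have hz1 : ‖z‖ < 1 := by
      simpa using mem_ball_zero_iff.mp hz
    have habs : ‖c * z‖ < 1 := by
      rw [hc, norm_mul, Complex.norm_conj]
      nlinarith [norm_nonneg z]
    intro h
    have h1 : c * z = 1 := by linear_combination -h
    rw [h1] at habs
    simp at habs
  have hcw : 1 - c * w = ((ρ:ℝ):ℂ) := by
    rw [hc, hρdef, mul_comm, Complex.mul_conj, Complex.normSq_eq_norm_sq]
    push_cast
    ring
  have hwball : w ∈ ball (0:ℂ) 1 := by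
    simpa [mem_ball_zero_iff] using hw
  have hwne : 1 - c * w ≠ 0 := by rw [hcw]; exact hρC
  refine ⟨FF c K1 K2 K3 K4 0, ?_, ?_, ?_⟩
  · intro z hz
    exact (hd_FF c K1 K2 K3 K4 0 z (hne z hz)).differentiableAt.differentiableWithinAt
  · intro z hz
    have hgz : FF c K1 K2 K3 K4 0 z
        = K1 * (1 - c * z) ^ (-((1:ℕ):ℤ)) + K2 * (1 - c * z) ^ (-((2:ℕ):ℤ))
          + K3 * (1 - c * z) ^ (-((3:ℕ):ℤ)) + K4 * (1 - c * z) ^ (-((4:ℕ):ℤ)) := by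
      unfold FF
      norm_num
    rw [hgz]
    set A := ‖1 - c * z‖ with hA
    have hApos : 0 < A := norm_pos_iff.mpr (hne z hz)
    have hz1 : ‖z‖ < 1 := by
      simpa using mem_ball_zero_iff.mp hz
    have hwle : 1 - ‖w‖ ≤ A := by
      have h1 : ‖c * z‖ ≤ ‖w‖ := by
        rw [hc, norm_mul, Complex.norm_conj]
        nlinarith [norm_nonneg z]
      have h2 := norm_sub_norm_le (1:ℂ) (c * z)
      simp only [norm_one] at h2
      rw [hA]
      linarith
    have hratio : ρ ≤ 2 * A := by nlinarith
    have hterm : ∀ (k : ℕ) (b : ℂ), k ≤ 4 →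
        ‖b * ((ρ:ℝ):ℂ) ^ k / (i.factorial : ℂ) * (1 - c * z) ^ (-(k:ℤ))‖
          ≤ 16 * ‖b‖ := by
      intro k b hk4
      rw [norm_mul, norm_div, norm_mul, norm_pow, norm_zpow, Complex.norm_real, Real.norm_eq_abs,
        Complex.norm_natCast, abs_of_pos hρpos, zpow_neg, zpow_natCast]
      have hAk : (0:ℝ) < A ^ k := pow_pos hApos k
      have h2k : (ρ / A) ^ k ≤ 16 := by
        calc (ρ / A) ^ k ≤ 2 ^ k := by
              apply pow_le_pow_left₀ (by positivity)
              rw [div_le_iff₀ hApos]; linarith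
          _ ≤ 2 ^ 4 := by
              apply pow_le_pow_right₀ (by norm_num) hk4
          _ = 16 := by norm_num
      have hfact1 : (1:ℝ) ≤ (i.factorial : ℝ) := by
        exact_mod_cast Nat.one_le_iff_ne_zero.mpr (Nat.factorial_ne_zero i)
      have heq : ‖b‖ * ρ ^ k / (i.factorial : ℝ) * (A ^ k)⁻¹
          = ‖b‖ * ((ρ / A) ^ k) / (i.factorial : ℝ) := by
        rw [div_pow]
        ring
      rw [heq]
      have hb : 0 ≤ ‖b‖ := norm_nonneg b
      have hq : 0 ≤ (ρ / A) ^ k := by positivity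
      calc ‖b‖ * ((ρ / A) ^ k) / (i.factorial : ℝ)
          ≤ ‖b‖ * ((ρ / A) ^ k) := div_le_self (by positivity) hfact1
        _ ≤ ‖b‖ * 16 := mul_le_mul_of_nonneg_left h2k hb
        _ = 16 * ‖b‖ := by ring
    have tri : ∀ a b c d : ℂ, ‖a + b + c + d‖
        ≤ ‖a‖ + ‖b‖ + ‖c‖ + ‖d‖ := by
      intro a b c d
      calc ‖a + b + c + d‖ ≤ ‖a + b + c‖ + ‖d‖ :=
            norm_add_le _ _
        _ ≤ (‖a + b‖ + ‖c‖) + ‖d‖ := by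
            have := norm_add_le (a + b) c; linarith
        _ ≤ ‖a‖ + ‖b‖ + ‖c‖ + ‖d‖ := by
            have := norm_add_le a b; linarith
    rw [hK1, hK2, hK3, hK4]
    have h1 := hterm 1 b1 (by norm_num)
    have h2 := hterm 2 b2 (by norm_num)
    have h3 := hterm 3 b3 (by norm_num)
    have h4 := hterm 4 b4 (by norm_num)
    have htri := tri (b1 * ((ρ:ℝ):ℂ) ^ (1:ℕ) / (i.factorial : ℂ) * (1 - c * z) ^ (-((1:ℕ):ℤ)))
      (b2 * ((ρ:ℝ):ℂ) ^ (2:ℕ) / (i.factorial : ℂ) * (1 - c * z) ^ (-((2:ℕ):ℤ)))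
      (b3 * ((ρ:ℝ):ℂ) ^ (3:ℕ) / (i.factorial : ℂ) * (1 - c * z) ^ (-((3:ℕ):ℤ)))
      (b4 * ((ρ:ℝ):ℂ) ^ (4:ℕ) / (i.factorial : ℂ) * (1 - c * z) ^ (-((4:ℕ):ℤ)))
    linarith
  · -- derivative values
    have key : ∀ jv : ℕ, iteratedDeriv jv (FF c K1 K2 K3 K4 0) w
        = c ^ jv * ((((ρ:ℝ):ℂ)) ^ jv)⁻¹ * ((jv.factorial : ℂ) / (i.factorial : ℂ)) *
          (b1 + b2 * (1 + (jv:ℂ)) + b3 * ((1 + (jv:ℂ)) * (2 + (jv:ℂ))) / 2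
            + b4 * ((1 + (jv:ℂ)) * (2 + (jv:ℂ)) * (3 + (jv:ℂ))) / 6) := by
      intro jv
      rw [iter_deriv_formula c K1 K2 K3 K4 jv w hwne]
      unfold FF
      rw [hcw]
      have hzgen : ∀ (a : ℤ) (bn : ℕ), a = -(bn:ℤ) →
          ((ρ:ℝ):ℂ) ^ (a - (jv:ℤ)) = (((ρ:ℝ):ℂ) ^ bn)⁻¹ * ((((ρ:ℝ):ℂ)) ^ jv)⁻¹ := by
        intro a bn ha
        subst ha
        rw [zpow_sub₀ hρC, zpow_neg, zpow_natCast, zpow_natCast, div_eq_mul_inv]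
      rw [prodP4, prodP3, prodP2, prod_one_factorial]
      have hρpow : (((ρ:ℝ):ℂ)) ^ jv ≠ 0 := pow_ne_zero _ hρC
      have t1 : K1 * ((ρ:ℝ):ℂ) ^ (-1 - (jv:ℤ)) = b1 / (i.factorial : ℂ) * ((((ρ:ℝ):ℂ)) ^ jv)⁻¹ := by
        rw [hK1, hzgen (-1) 1 (by norm_num)]
        field_simp
      have t2 : K2 * ((ρ:ℝ):ℂ) ^ (-2 - (jv:ℤ)) = b2 / (i.factorial : ℂ) * ((((ρ:ℝ):ℂ)) ^ jv)⁻¹ := by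
        rw [hK2, hzgen (-2) 2 (by norm_num)]
        field_simp
      have t3 : K3 * ((ρ:ℝ):ℂ) ^ (-3 - (jv:ℤ)) = b3 / (i.factorial : ℂ) * ((((ρ:ℝ):ℂ)) ^ jv)⁻¹ := by
        rw [hK3, hzgen (-3) 3 (by norm_num)]
        field_simp
      have t4 : K4 * ((ρ:ℝ):ℂ) ^ (-4 - (jv:ℤ)) = b4 / (i.factorial : ℂ) * ((((ρ:ℝ):ℂ)) ^ jv)⁻¹ := by
        rw [hK4, hzgen (-4) 4 (by norm_num)]
        field_simp
      linear_combination (c ^ jv * (jv.factorial : ℂ)) * t1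
        + (c ^ jv * ((1 + (jv:ℂ)) * (jv.factorial : ℂ))) * t2
        + (c ^ jv * ((2 + (jv:ℂ)) * ((1 + (jv:ℂ)) * (jv.factorial : ℂ)) / 2)) * t3
        + (c ^ jv * ((3 + (jv:ℂ)) * ((2 + (jv:ℂ)) * ((1 + (jv:ℂ)) * (jv.factorial : ℂ)) / 2) / 3)) * t4
    intro j hj
    have hDne : ((i:ℂ) - (j1:ℂ)) * ((i:ℂ) - (j2:ℂ)) * ((i:ℂ) - (j3:ℂ)) ≠ 0 := by
      have e1 : ((i:ℂ) - (j1:ℂ)) ≠ 0 := sub_ne_zero.mpr (by exact_mod_cast hd1)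
      have e2 : ((i:ℂ) - (j2:ℂ)) ≠ 0 := sub_ne_zero.mpr (by exact_mod_cast hd2)
      have e3 : ((i:ℂ) - (j3:ℂ)) ≠ 0 := sub_ne_zero.mpr (by exact_mod_cast hd3)
      exact mul_ne_zero (mul_ne_zero e1 e2) e3
    rcases hj with rfl | rfl | rfl | rfl
    · rw [key j, hE ((j:ℂ)), if_pos rfl, div_self hDne, div_self hfacne, mul_one, mul_one,
        div_eq_mul_inv]
    · rw [key, hE, if_neg (fun h => hd1 h.symm), sub_self, zero_mul, zero_mul, zero_div,
        mul_zero]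
    · rw [key, hE, if_neg (fun h => hd2 h.symm), sub_self, mul_zero, zero_mul, zero_div,
        mul_zero]
    · rw [key, hE, if_neg (fun h => hd3 h.symm), sub_self, mul_zero, zero_div, mul_zero]

/-- Test functions in `H^∞` whose derivatives of orders `m, m+1, n, n+1` at `w`
interpolate Kronecker-delta values, with sup-norm bound independent of `w`. -/
theorem hinf_test_functions (m n : ℕ) (hn : 1 ≤ n) (hmn : m + 1 < n) :
    ∃ C : ℝ, 0 < C ∧ ∀ w ∈ ball (0:ℂ) 1, ∀ i ∈ ({m, m + 1, n, n + 1} : Set ℕ),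
      ∃ g : ℂ → ℂ, DifferentiableOn ℂ g (ball (0:ℂ) 1) ∧
        (∀ z ∈ ball (0:ℂ) 1, ‖g z‖ ≤ C) ∧
        ∀ j ∈ ({m, m + 1, n, n + 1} : Set ℕ),
          iteratedDeriv j g w =
            if j = i then ((starRingEnd ℂ) w) ^ i / ((1 - ‖w‖ ^ 2 : ℝ) : ℂ) ^ i
            else 0 := by
  have hcne : ∀ a b : ℕ, a ≠ b → (((a:ℕ):ℂ) - ((b:ℕ):ℂ)) ≠ 0 := fun a b h =>
    sub_ne_zero.mpr (by exact_mod_cast h)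
  obtain ⟨a1, a2, a3, a4, hA⟩ := lagrange4 ((m:ℕ):ℂ) (((m+1:ℕ)):ℂ) ((n:ℕ):ℂ) (((n+1:ℕ)):ℂ)
    (hcne _ _ (by omega)) (hcne _ _ (by omega)) (hcne _ _ (by omega))
  obtain ⟨b1, b2, b3, b4, hB⟩ := lagrange4 (((m+1:ℕ)):ℂ) ((m:ℕ):ℂ) ((n:ℕ):ℂ) (((n+1:ℕ)):ℂ)
    (hcne _ _ (by omega)) (hcne _ _ (by omega)) (hcne _ _ (by omega))
  obtain ⟨c1, c2, c3, c4, hC⟩ := lagrange4 ((n:ℕ):ℂ) ((m:ℕ):ℂ) (((m+1:ℕ)):ℂ) (((n+1:ℕ)):ℂ)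
    (hcne _ _ (by omega)) (hcne _ _ (by omega)) (hcne _ _ (by omega))
  obtain ⟨d1, d2, d3, d4, hD⟩ := lagrange4 (((n+1:ℕ)):ℂ) ((m:ℕ):ℂ) (((m+1:ℕ)):ℂ) ((n:ℕ):ℂ)
    (hcne _ _ (by omega)) (hcne _ _ (by omega)) (hcne _ _ (by omega))
  set S : ℝ := (‖a1‖ + ‖a2‖ + ‖a3‖ + ‖a4‖)
    + (‖b1‖ + ‖b2‖ + ‖b3‖ + ‖b4‖)
    + (‖c1‖ + ‖c2‖ + ‖c3‖ + ‖c4‖)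
    + (‖d1‖ + ‖d2‖ + ‖d3‖ + ‖d4‖) with hS
  have habs : ∀ x : ℂ, 0 ≤ ‖x‖ := fun x => norm_nonneg x
  refine ⟨1 + 16 * S, by positivity, ?_⟩
  intro w hw i hi
  have hw' : ‖w‖ < 1 := by
    simpa using mem_ball_zero_iff.mp hw
  simp only [Set.mem_insert_iff, Set.mem_singleton_iff] at hi
  rcases hi with hi | hi | hi | hi
  · obtain ⟨g, hgd, hgb, hgv⟩ := main_aux w hw' m (m+1) n (n+1) a1 a2 a3 a4
      (by omega) (by omega) (by omega) hA
    refine ⟨g, hgd, fun z hz => le_trans (hgb z hz) ?_, ?_⟩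
    · rw [hS]
      linarith [habs b1, habs b2, habs b3, habs b4, habs c1, habs c2, habs c3, habs c4,
        habs d1, habs d2, habs d3, habs d4]
    · intro j hj
      simp only [Set.mem_insert_iff, Set.mem_singleton_iff] at hj
      rw [hi]
      exact hgv j (by tauto)
  · obtain ⟨g, hgd, hgb, hgv⟩ := main_aux w hw' (m+1) m n (n+1) b1 b2 b3 b4
      (by omega) (by omega) (by omega) hB
    refine ⟨g, hgd, fun z hz => le_trans (hgb z hz) ?_, ?_⟩
    · rw [hS]
      linarith [habs a1, habs a2, habs a3, habs a4, habs c1, habs c2, habs c3, habs c4,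
        habs d1, habs d2, habs d3, habs d4]
    · intro j hj
      simp only [Set.mem_insert_iff, Set.mem_singleton_iff] at hj
      rw [hi]
      exact hgv j (by tauto)
  · obtain ⟨g, hgd, hgb, hgv⟩ := main_aux w hw' n m (m+1) (n+1) c1 c2 c3 c4
      (by omega) (by omega) (by omega) hC
    refine ⟨g, hgd, fun z hz => le_trans (hgb z hz) ?_, ?_⟩
    · rw [hS]
      linarith [habs a1, habs a2, habs a3, habs a4, habs b1, habs b2, habs b3, habs b4,
        habs d1, habs d2, habs d3, habs d4]
    · intro j hj
      simp only [Set.mem_insert_iff, Set.mem_singleton_iff] at hj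
      rw [hi]
      exact hgv j (by tauto)
  · obtain ⟨g, hgd, hgb, hgv⟩ := main_aux w hw' (n+1) m (m+1) n d1 d2 d3 d4
      (by omega) (by omega) (by omega) hD
    refine ⟨g, hgd, fun z hz => le_trans (hgb z hz) ?_, ?_⟩
    · rw [hS]
      linarith [habs a1, habs a2, habs a3, habs a4, habs b1, habs b2, habs b3, habs b4,
        habs c1, habs c2, habs c3, habs c4]
    · intro j hj
      simp only [Set.mem_insert_iff, Set.mem_singleton_iff] at hj
      rw [hi]
      exact hgv j (by tauto)
end
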